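/- Let Ω₁, Ω₂ be 2×2 diagonal complex matrices with diagonal entries ω₁₁,ω₁₂ and ω₂₁,ω₂₂, with Ω₂ having real entries. If there exists an invertible 2×2 complex matrix X ∉ 𝒢(2) such that Xᴴ Ω₁ X̄ and Xᴴ Ω₂ X are both diagonal, then |ω₁₁|·|ω₂₂| = |ω₁₂|·|ω₂₁|. -/

import Mathlib

open Matrix Complex

/-- Membership in `𝒢(m)`: `X = D * P` with `D` invertible diagonal and `P` a
permutation matrix. -/
def inG (m : ℕ) (X : Matrix (Fin m) (Fin m) ℂ) : Prop :=
  ∃ (D : Matrix (Fin m) (Fin m) ℂ) (σ : Equiv.Perm (Fin m)),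
    D.IsDiag ∧ IsUnit D.det ∧ X = D * σ.permMatrix ℂ

/-- If some invertible `X ∉ 𝒢(2)` simultaneously diagonalizes
`Ω₁` via `Xᴴ Ω₁ X̄` and the real `Ω₂` via `Xᴴ Ω₂ X`, then
`|ω₁₁|·|ω₂₂| = |ω₁₂|·|ω₂₁|`. -/
theorem stmt_5 (ω₁ : Fin 2 → ℂ) (ω₂ : Fin 2 → ℝ)
    (X : Matrix (Fin 2) (Fin 2) ℂ) (hX : IsUnit X.det) (hXG : ¬ inG 2 X)
    (h1 : (Xᴴ * Matrix.diagonal ω₁ * X.map (starRingEnd ℂ)).IsDiag)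
    (h2 : (Xᴴ * Matrix.diagonal (fun k => (ω₂ k : ℂ)) * X).IsDiag) :
    ‖ω₁ 0‖ * |ω₂ 1| = ‖ω₁ 1‖ * |ω₂ 0| := by
  have e1 := h1 (Fin.ne_of_val_ne (by norm_num : (0:Fin 2).val ≠ (1:Fin 2).val))
  have e2 := h2 (Fin.ne_of_val_ne (by norm_num : (0:Fin 2).val ≠ (1:Fin 2).val))
  simp only [Matrix.mul_apply, Fin.sum_univ_two, Matrix.diagonal, Matrix.conjTranspose_apply,
    Matrix.map_apply, Matrix.of_apply, ite_mul, zero_mul, mul_ite, mul_zero] at e1 e2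
  simp only [show ((0:Fin 2) = 1) = False by simp, show ((1:Fin 2) = 0) = False by simp,
    if_true, if_false, if_pos rfl, zero_add, add_zero, eq_self_iff_true,
    ← starRingEnd_apply] at e1 e2
  -- e1 : conj (X 0 0) * ω₁ 0 * conj (X 0 1) + conj (X 1 0) * ω₁ 1 * conj (X 1 1) = 0
  -- e2 : conj (X 0 0) * ω₂ 0 * X 0 1 + conj (X 1 0) * ω₂ 1 * X 1 1 = 0
  have hdet : X.det = X 0 0 * X 1 1 - X 0 1 * X 1 0 := Matrix.det_fin_two X
  by_cases hab : X 0 0 * X 0 1 = 0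
  · by_cases hcd : X 1 0 * X 1 1 = 0
    · -- both products vanish: X is diagonal or antidiagonal or singular
      exfalso
      rcases mul_eq_zero.1 hab with h1' | h1' <;> rcases mul_eq_zero.1 hcd with h2' | h2'
      · -- X 0 0 = 0, X 1 0 = 0 : singular
        rw [hdet, h1', h2'] at hX; simp at hX
      · -- X 0 0 = 0, X 1 1 = 0 : antidiagonal
        apply hXG
        refine ⟨Matrix.diagonal ![X 0 1, X 1 0], Equiv.swap 0 1,
          Matrix.isDiag_diagonal _, ?_, ?_⟩
        · have hu : IsUnit (-(X 0 1 * X 1 0)) := by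
            rw [hdet, h1', h2'] at hX; simpa using hX
          rw [Matrix.det_diagonal]
          simpa [Fin.prod_univ_two] using hu.neg
        · ext i j
          fin_cases i <;> fin_cases j <;>
            simp [Matrix.mul_apply, Fin.sum_univ_two, Equiv.Perm.permMatrix,
              PEquiv.toMatrix_apply, Equiv.toPEquiv, Equiv.swap_apply_def, h1', h2']
      · -- X 0 1 = 0, X 1 0 = 0 : diagonal
        apply hXG
        refine ⟨X, 1, ?_, hX, ?_⟩
        · intro i j hij
          fin_cases i <;> fin_cases j <;> simp_all
        · ext i j
          fin_cases i <;> fin_cases j <;>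
            simp [Matrix.mul_apply, Fin.sum_univ_two, Equiv.Perm.permMatrix,
              PEquiv.toMatrix_apply, Equiv.toPEquiv]
      · -- X 0 1 = 0, X 1 1 = 0 : singular
        rw [hdet, h1', h2'] at hX; simp at hX
    · -- ab = 0, cd ≠ 0 ⇒ ω₁ 1 = 0 and ω₂ 1 = 0
      have hcne : X 1 0 ≠ 0 := fun h => hcd (by simp [h])
      have hdne : X 1 1 ≠ 0 := fun h => hcd (by simp [h])
      have hab' : (starRingEnd ℂ) (X 0 0) * ω₁ 0 * (starRingEnd ℂ) (X 0 1) = 0 ∧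
          (starRingEnd ℂ) (X 0 0) * (ω₂ 0 : ℂ) * X 0 1 = 0 := by
        rcases mul_eq_zero.1 hab with h | h <;> simp [h]
      rw [hab'.1, zero_add] at e1
      rw [hab'.2, zero_add] at e2
      have hw1 : ω₁ 1 = 0 := by
        rcases mul_eq_zero.1 e1 with h | h
        · rcases mul_eq_zero.1 h with h' | h'
          · exact absurd h' (by simpa using hcne)
          · exact h'
        · exact absurd h (by simpa using hdne)
      have hw2 : ω₂ 1 = 0 := by
        rcases mul_eq_zero.1 e2 with h | h
        · rcases mul_eq_zero.1 h with h' | h'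
          · exact absurd h' (by simpa using hcne)
          · exact_mod_cast h'
        · exact absurd h hdne
      simp [hw1, hw2]
  · by_cases hcd : X 1 0 * X 1 1 = 0
    · -- cd = 0, ab ≠ 0 ⇒ ω₁ 0 = 0 and ω₂ 0 = 0
      have hane : X 0 0 ≠ 0 := fun h => hab (by simp [h])
      have hbne : X 0 1 ≠ 0 := fun h => hab (by simp [h])
      have hcd' : (starRingEnd ℂ) (X 1 0) * ω₁ 1 * (starRingEnd ℂ) (X 1 1) = 0 ∧
          (starRingEnd ℂ) (X 1 0) * (ω₂ 1 : ℂ) * X 1 1 = 0 := by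
        rcases mul_eq_zero.1 hcd with h | h <;> simp [h]
      rw [hcd'.1, add_zero] at e1
      rw [hcd'.2, add_zero] at e2
      have hw1 : ω₁ 0 = 0 := by
        rcases mul_eq_zero.1 e1 with h | h
        · rcases mul_eq_zero.1 h with h' | h'
          · exact absurd h' (by simpa using hane)
          · exact h'
        · exact absurd h (by simpa using hbne)
      have hw2 : ω₂ 0 = 0 := by
        rcases mul_eq_zero.1 e2 with h | h
        · rcases mul_eq_zero.1 h with h' | h'
          · exact absurd h' (by simpa using hane)
          · exact_mod_cast h'
        · exact absurd h hbne
      simp [hw1, hw2]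
    · -- generic case: both nonzero
      have hane : X 0 0 ≠ 0 := fun h => hab (by simp [h])
      have hbne : X 0 1 ≠ 0 := fun h => hab (by simp [h])
      have hcne : X 1 0 ≠ 0 := fun h => hcd (by simp [h])
      have hdne : X 1 1 ≠ 0 := fun h => hcd (by simp [h])
      have A1 : ‖ω₁ 0‖ * (‖X 0 0‖ * ‖X 0 1‖)
          = ‖ω₁ 1‖ * (‖X 1 0‖ * ‖X 1 1‖) := by
        have h := congrArg (‖·‖) (eq_neg_of_add_eq_zero_left e1)
        simp only [norm_mul, norm_neg, Complex.norm_conj] at h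
        linear_combination h
      have A2 : |ω₂ 0| * (‖X 0 0‖ * ‖X 0 1‖)
          = |ω₂ 1| * (‖X 1 0‖ * ‖X 1 1‖) := by
        have h := congrArg (‖·‖) (eq_neg_of_add_eq_zero_left e2)
        simp only [norm_mul, norm_neg, Complex.norm_conj,
          Complex.norm_real, Real.norm_eq_abs] at h
        linear_combination h
      have ht : ‖X 0 0‖ * ‖X 0 1‖ ≠ 0 := by simp [hane, hbne]
      have hs : ‖X 1 0‖ * ‖X 1 1‖ ≠ 0 := by simp [hcne, hdne]
      apply mul_right_cancel₀ (mul_ne_zero ht hs)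
      linear_combination (|ω₂ 1| * (‖X 1 0‖ * ‖X 1 1‖)) * A1
        - (‖ω₁ 1‖ * (‖X 1 0‖ * ‖X 1 1‖)) * A2
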